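/- Let Σ = {u = 0} be a regular surface in the Heisenberg group and γ : [a,b] → Σ a Euclidean C²-smooth regular curve through non-characteristic points. If ω(γ̇(t)) ≠ 0, then the limit as L → +∞ of the geodesic curvature k^{L,∇¹}_{γ,Σ}(t) associated to the second Schouten–Van Kampen affine connection exists and equals |p̄(γ(t))γ̇₁(t)| / (2|ω(γ̇(t))|). -/

import Mathlib

set_option maxHeartbeats 1000000


open Filter Real Topology

theorem geodesic_curvature_limit_second_SvK_nonhorizontal
    (u : ℝ → ℝ → ℝ → ℝ)
    (γ₁ γ₂ γ₃ ω p q uz lf pbar qbar c1 : ℝ → ℝ)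
    (rr lL rbar c2 aa bb k : ℝ → ℝ → ℝ)
    (a b t : ℝ) (ht : t ∈ Set.Icc a b)
    (hu : ContDiff ℝ 2 (fun v : ℝ × ℝ × ℝ => u v.1 v.2.1 v.2.2))
    (hγ : ContDiffOn ℝ 2 (fun s => (γ₁ s, γ₂ s, γ₃ s)) (Set.Icc a b))
    (hreg : ∀ s ∈ Set.Icc a b, ¬ (deriv γ₁ s = 0 ∧ deriv γ₂ s = 0 ∧ deriv γ₃ s = 0))
    (hSurf : ∀ s ∈ Set.Icc a b, u (γ₁ s) (γ₂ s) (γ₃ s) = 0)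
    (hω : ∀ s, ω s = deriv γ₃ s + (1/2) * (γ₂ s * deriv γ₁ s - γ₁ s * deriv γ₂ s))
    (hp : ∀ s, p s = deriv (fun x => u x (γ₂ s) (γ₃ s)) (γ₁ s)
        - (γ₂ s / 2) * deriv (fun z => u (γ₁ s) (γ₂ s) z) (γ₃ s))
    (hq : ∀ s, q s = deriv (fun y => u (γ₁ s) y (γ₃ s)) (γ₂ s)
        + (γ₁ s / 2) * deriv (fun z => u (γ₁ s) (γ₂ s) z) (γ₃ s))
    (huz : ∀ s, uz s = deriv (fun z => u (γ₁ s) (γ₂ s) z) (γ₃ s))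
    (hl : ∀ s, lf s = Real.sqrt (p s ^ 2 + q s ^ 2))
    (hnc : ∀ s ∈ Set.Icc a b, lf s ≠ 0)
    (hpbar : ∀ s, pbar s = p s / lf s)
    (hqbar : ∀ s, qbar s = q s / lf s)
    (hrr : ∀ L s, rr L s = uz s / Real.sqrt L)
    (hlL : ∀ L s, lL L s = Real.sqrt (p s ^ 2 + q s ^ 2 + rr L s ^ 2))
    (hrbar : ∀ L s, rbar L s = rr L s / lL L s)
    (hc1 : ∀ s, c1 s = qbar s * deriv γ₁ s - pbar s * deriv γ₂ s)
    (hc2 : ∀ L s, c2 L s = rbar L s * (pbar s * deriv γ₁ s + qbar s * deriv γ₂ s)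
        - (lf s / lL L s) * Real.sqrt L * ω s)
    (haa : ∀ L s, aa L s = qbar s * deriv (deriv γ₁) s - pbar s * (deriv (deriv γ₂) s - L * ω s * deriv γ₁ s / 2))
    (hbb : ∀ L s, bb L s = rbar L s * pbar s * deriv (deriv γ₁) s + rbar L s * qbar s * (deriv (deriv γ₂) s - L * ω s * deriv γ₁ s / 2) - (lf s / lL L s) * Real.sqrt L * (deriv ω s + deriv γ₁ s * deriv γ₂ s / 2))
    (hk : ∀ L s, k L s = Real.sqrt ((aa L s ^ 2 + bb L s ^ 2) / ((deriv γ₁ s)^2 + (deriv γ₂ s)^2 + L * (ω s)^2)^2 - (aa L s * c1 s + bb L s * c2 L s)^2 / ((deriv γ₁ s)^2 + (deriv γ₂ s)^2 + L * (ω s)^2)^3))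
    (h0 : ω t ≠ 0) :
    Filter.Tendsto (fun L => k L t) Filter.atTop
      (nhds (|pbar t * deriv γ₁ t| / (2 * |ω t|))) := by

  -- notation
  have hl0 : lf t ≠ 0 := hnc t ht
  have hpq : 0 < p t ^ 2 + q t ^ 2 := by
    rcases lt_or_eq_of_le (by positivity : (0:ℝ) ≤ p t ^ 2 + q t ^ 2) with h | h
    · exact h
    · exact absurd (by rw [hl t, ← h, Real.sqrt_zero]) hl0
  have hw2 : (0:ℝ) < ω t ^ 2 := by positivity
  set d1 := deriv γ₁ t
  set d2 := deriv γ₂ t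
  set dd1 := deriv (deriv γ₁) t
  set dd2 := deriv (deriv γ₂) t
  set w := ω t with hwdef
  set P := pbar t
  set Q := qbar t
  set U := uz t
  set E := deriv ω t + d1 * d2 / 2 with hE
  set NL : ℝ → ℝ := fun L => d1 ^ 2 + d2 ^ 2 + L * w ^ 2 with hNL
  set A0 : ℝ := Q * dd1 - P * dd2 with hA0
  set A1 : ℝ := P * w * d1 / 2 with hA1
  -- N tends to atTop
  have hN : Tendsto NL atTop atTop := by
    apply tendsto_atTop_add_const_left
    exact Tendsto.atTop_mul_const hw2 tendsto_id
  have hinvN : Tendsto (fun L => 1 / NL L) atTop (nhds 0) := by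
    have := hN.inv_tendsto_atTop
    simp only [one_div]
    exact this
  have hLN : Tendsto (fun L => L / NL L) atTop (nhds (1 / w ^ 2)) := by
    have h1 : Tendsto (fun L : ℝ => (d1 ^ 2 + d2 ^ 2) / L + w ^ 2) atTop
        (nhds (0 + w ^ 2)) :=
      (tendsto_const_nhds.div_atTop tendsto_id).add tendsto_const_nhds
    have h2 : Tendsto (fun L : ℝ => 1 / ((d1 ^ 2 + d2 ^ 2) / L + w ^ 2)) atTop
        (nhds (1 / (0 + w ^ 2))) := tendsto_const_nhds.div h1 (by positivity)
    rw [zero_add] at h2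
    apply h2.congr'
    filter_upwards [eventually_gt_atTop (0:ℝ)] with L hL
    rw [hNL]
    field_simp
  -- sqrt to atTop
  have hsqrt : Tendsto Real.sqrt atTop atTop := by
    apply tendsto_atTop_atTop_of_monotone (fun a b h => Real.sqrt_le_sqrt h)
    intro c; exact ⟨c ^ 2, by rw [Real.sqrt_sq_eq_abs]; exact le_abs_self c⟩
  -- lL
  have hlLpos : ∀ L : ℝ, 0 < lL L t := by
    intro L
    rw [hlL]
    exact Real.sqrt_pos.2 (by nlinarith [sq_nonneg (rr L t)])
  have hrr0 : Tendsto (fun L => rr L t) atTop (nhds 0) := by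
    simp only [hrr]
    exact tendsto_const_nhds.div_atTop hsqrt
  have hlLt : Tendsto (fun L => lL L t) atTop (nhds (lf t)) := by
    have : Tendsto (fun L => p t ^ 2 + q t ^ 2 + rr L t ^ 2) atTop
        (nhds (p t ^ 2 + q t ^ 2 + 0 ^ 2)) :=
      tendsto_const_nhds.add ((hrr0.pow 2))
    have h2 := this.sqrt
    simp only [hlL]
    rw [hl t]
    simpa using h2
  have hlft : lf t ≠ 0 := hl0
  -- beta and gamma
  set βf : ℝ → ℝ := fun L => bb L t / Real.sqrt L with hβf
  set γf : ℝ → ℝ := fun L => c2 L t / Real.sqrt L with hγf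
  have hβev : βf =ᶠ[atTop] fun L =>
      U * (P * dd1 + Q * dd2) / lL L t * (1 / L)
        - U * Q * (w * d1) / (2 * lL L t) - lf t / lL L t * E := by
    filter_upwards [eventually_gt_atTop (0:ℝ)] with L hL
    have hs : (0:ℝ) < Real.sqrt L := Real.sqrt_pos.2 hL
    have hss : Real.sqrt L * Real.sqrt L = L := Real.mul_self_sqrt hL.le
    have hlLn := (hlLpos L).ne'
    simp only [hβf, hbb, hrbar, hrr, hE]
    set s := Real.sqrt L with hsdef
    rw [← hss] at hlLn ⊢
    field_simp [hs.ne', hlLn]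
    ring
  have hγev : γf =ᶠ[atTop] fun L =>
      U * (P * d1 + Q * d2) / lL L t * (1 / L) - lf t / lL L t * w := by
    filter_upwards [eventually_gt_atTop (0:ℝ)] with L hL
    have hs : (0:ℝ) < Real.sqrt L := Real.sqrt_pos.2 hL
    have hss : Real.sqrt L * Real.sqrt L = L := Real.mul_self_sqrt hL.le
    have hlLn := (hlLpos L).ne'
    simp only [hγf, hc2, hrbar, hrr]
    set s := Real.sqrt L with hsdef
    rw [← hss] at hlLn ⊢
    field_simp [hs.ne', hlLn]
    ring
  have hinvL : Tendsto (fun L : ℝ => 1 / L) atTop (nhds 0) :=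
    tendsto_const_nhds.div_atTop tendsto_id
  have hβ : Tendsto βf atTop
      (nhds (U * (P * dd1 + Q * dd2) / lf t * 0
        - U * Q * (w * d1) / (2 * lf t) - lf t / lf t * E)) := by
    refine Tendsto.congr' hβev.symm ?_
    exact (((tendsto_const_nhds.div hlLt hlft).mul hinvL).sub
      (tendsto_const_nhds.div (hlLt.const_mul 2) (by simpa using hlft))).sub
      ((tendsto_const_nhds.div hlLt hlft).mul_const E)
  have hγ : Tendsto γf atTop
      (nhds (U * (P * d1 + Q * d2) / lf t * 0 - lf t / lf t * w)) := by
    refine Tendsto.congr' hγev.symm ?_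
    exact ((tendsto_const_nhds.div hlLt hlft).mul hinvL).sub
      ((tendsto_const_nhds.div hlLt hlft).mul_const w)
  set β0 : ℝ := U * (P * dd1 + Q * dd2) / lf t * 0
        - U * Q * (w * d1) / (2 * lf t) - lf t / lf t * E with hβ0
  set γ0 : ℝ := U * (P * d1 + Q * d2) / lf t * 0 - lf t / lf t * w with hγ0
  -- aa / N decomposition limit
  have haN : Tendsto (fun L => A0 * (1 / NL L) + A1 * (L / NL L)) atTop
      (nhds (A0 * 0 + A1 * (1 / w ^ 2))) :=
    ((hinvN.const_mul A0)).add (hLN.const_mul A1)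
  -- the main function under the sqrt
  set G : ℝ → ℝ := fun L =>
    (A0 * (1 / NL L) + A1 * (L / NL L)) ^ 2
      + βf L ^ 2 * (L / NL L) * (1 / NL L)
      - (c1 t * (A0 * (1 / NL L) + A1 * (L / NL L)) + βf L * γf L * (L / NL L)) ^ 2
        * (1 / NL L) with hG
  have hGlim : Tendsto G atTop (nhds ((A1 * (1 / w ^ 2)) ^ 2)) := by
    have h1 : Tendsto (fun L => (A0 * (1 / NL L) + A1 * (L / NL L)) ^ 2) atTop
        (nhds ((A0 * 0 + A1 * (1 / w ^ 2)) ^ 2)) := haN.pow 2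
    have h2 : Tendsto (fun L => βf L ^ 2 * (L / NL L) * (1 / NL L)) atTop
        (nhds (β0 ^ 2 * (1 / w ^ 2) * 0)) := ((hβ.pow 2).mul hLN).mul hinvN
    have h3 : Tendsto (fun L =>
        (c1 t * (A0 * (1 / NL L) + A1 * (L / NL L)) + βf L * γf L * (L / NL L)) ^ 2
          * (1 / NL L)) atTop
        (nhds ((c1 t * (A0 * 0 + A1 * (1 / w ^ 2)) + β0 * γ0 * (1 / w ^ 2)) ^ 2 * 0)) :=
      (((haN.const_mul (c1 t)).add ((hβ.mul hγ).mul hLN)).pow 2).mul hinvN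
    have := (h1.add h2).sub h3
    convert this using 2
    ring
  -- F = G eventually
  have hFev : (fun L => (aa L t ^ 2 + bb L t ^ 2) / NL L ^ 2
      - (aa L t * c1 t + bb L t * c2 L t) ^ 2 / NL L ^ 3) =ᶠ[atTop] G := by
    filter_upwards [eventually_gt_atTop (0:ℝ), hN.eventually_gt_atTop 0] with L hL hNpos
    have hs : (0:ℝ) < Real.sqrt L := Real.sqrt_pos.2 hL
    have hbbe : bb L t = Real.sqrt L * βf L := by
      rw [hβf]; field_simp
    have hc2e : c2 L t = Real.sqrt L * γf L := by
      rw [hγf]; field_simp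
    have haae : aa L t = A0 + L * A1 := by
      rw [haa, hA0, hA1]; ring
    have hss : Real.sqrt L * Real.sqrt L = L := Real.mul_self_sqrt hL.le
    have hNne : NL L ≠ 0 := hNpos.ne'
    simp only [hG, hbbe, hc2e, haae]
    set s := Real.sqrt L with hsdef
    rw [← hss] at hNne ⊢
    field_simp
  have hklim : Tendsto (fun L => k L t) atTop (nhds (Real.sqrt ((A1 * (1 / w ^ 2)) ^ 2))) := by
    have : Tendsto (fun L => (aa L t ^ 2 + bb L t ^ 2) / NL L ^ 2
        - (aa L t * c1 t + bb L t * c2 L t) ^ 2 / NL L ^ 3) atTop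
        (nhds ((A1 * (1 / w ^ 2)) ^ 2)) := hGlim.congr' hFev.symm
    have h2 := this.sqrt
    refine h2.congr fun L => ?_
    rw [hk]
  have hval : Real.sqrt ((A1 * (1 / w ^ 2)) ^ 2) = |P * d1| / (2 * |w|) := by
    have hA : A1 * (1 / w ^ 2) = P * d1 / (2 * w) := by
      rw [hA1]; field_simp
    rw [Real.sqrt_sq_eq_abs, hA, abs_div, abs_mul 2 w, abs_two]
  rw [← hval]
  exact hklim
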